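/- Assume t : ℂ → (0,∞) is continuous, satisfies |t(z) − t(ζ)| ≤ (1/4)|z − ζ| for all z, ζ ∈ ℂ, and t(z) → 0 as |z| → ∞. Then there exists a sequence of points (z_j) in ℂ such that: (i) z_j ∉ D(z_k, t(z_k)) for j ≠ k; (ii) ⋃_j D(z_j, t(z_j)) = ℂ; (iii) for each j, the set ⋃_{z ∈ D(z_j, t(z_j))} D(z, t(z)) is contained in D(z_j, 3 t(z_j)); (iv) the covering {D(z_j, 3t(z_j))} of ℂ has finite multiplicity, i.e. there is N such that every point of ℂ belongs to at most N of the discs D(z_j, 3t(z_j)). -/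

import Mathlib

open MeasureTheory Filter Metric
open scoped ENNReal


lemma myExistsMax (t : ℂ → ℝ) (hcont : Continuous t) (hpos : ∀ z, 0 < t z)
    (hfar : ∀ ε, 0 < ε → ∃ R : ℝ, ∀ v : ℂ, R ≤ ‖v‖ → t v < ε)
    {F : Set ℂ} (hF : IsClosed F) (hne : F.Nonempty) : ∃ w ∈ F, ∀ v ∈ F, t v ≤ t w := by
  obtain ⟨w0, hw0⟩ := hne
  obtain ⟨R, hR⟩ := hfar (t w0) (hpos w0)
  set K := F ∩ closedBall 0 R with hKdef
  have hK : IsCompact K := (isCompact_closedBall 0 R).inter_left hF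
  have hw0K : w0 ∈ K := by
    refine ⟨hw0, ?_⟩
    rcases le_or_gt R ‖w0‖ with h | h
    · exact absurd (hR w0 h) (lt_irrefl _)
    · simp [mem_closedBall, Complex.dist_eq, h.le]
  obtain ⟨w, hwK, hmax⟩ := hK.exists_isMaxOn ⟨w0, hw0K⟩ hcont.continuousOn
  refine ⟨w, hwK.1, fun v hv => ?_⟩
  rcases le_or_gt R ‖v‖ with h | h
  · exact (hR v h).le.trans (hmax hw0K)
  · exact hmax ⟨hv, by simp [mem_closedBall, Complex.dist_eq, h.le]⟩


lemma myEncardLe {S : Set ℕ} {N : ℕ} (h : ∀ F : Finset ℕ, ↑F ⊆ S → F.card ≤ N) :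
    S.encard ≤ N := by
  by_contra hc
  push_neg at hc
  have h1 : ((N + 1 : ℕ) : ℕ∞) ≤ S.encard := by
    exact_mod_cast Order.add_one_le_of_lt hc
  obtain ⟨T, hTS, hT⟩ := Set.exists_subset_encard_eq h1
  have hfin : T.Finite := Set.finite_of_encard_eq_coe hT
  have hcard := h hfin.toFinset (by simpa using hTS)
  rw [hfin.encard_eq_coe_toFinset_card] at hT
  have : hfin.toFinset.card = N + 1 := by exact_mod_cast hT
  omega

lemma myPacking (z : ℕ → ℂ) (S : Set ℕ) (c : ℂ) (ρ R : ℝ) (hρ : 0 < ρ) (N : ℕ)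
    (hsep : ∀ j ∈ S, ∀ k ∈ S, j ≠ k → 2 * ρ ≤ dist (z j) (z k))
    (hsub : ∀ j ∈ S, ball (z j) ρ ⊆ ball c R)
    (hN : R ^ 2 ≤ N * ρ ^ 2) : S.encard ≤ N := by
  rcases S.eq_empty_or_nonempty with rfl | ⟨j0, hj0⟩
  · simp
  have hR : 0 < R := by
    have := hsub j0 hj0 (mem_ball_self hρ)
    exact lt_of_le_of_lt dist_nonneg (mem_ball.mp this)
  apply myEncardLe
  intro F hF
  have hdisj : (↑F : Set ℕ).PairwiseDisjoint fun j => ball (z j) ρ := by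
    intro j hj k hk hjk
    exact ball_disjoint_ball (by linarith [hsep j (hF hj) k (hF hk) hjk])
  have h1 : ∑ j ∈ F, volume (ball (z j) ρ) = volume (⋃ j ∈ F, ball (z j) ρ) :=
    (measure_biUnion_finset hdisj fun j _ => measurableSet_ball).symm
  have h2 : volume (⋃ j ∈ F, ball (z j) ρ) ≤ volume (ball c R) :=
    measure_mono (Set.iUnion₂_subset fun j hj => hsub j (hF hj))
  have h3 : (F.card : ℝ≥0∞) * (ENNReal.ofReal (ρ ^ 2) * NNReal.pi)
      ≤ ENNReal.ofReal (R ^ 2) * NNReal.pi := by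
    calc (F.card : ℝ≥0∞) * (ENNReal.ofReal (ρ ^ 2) * NNReal.pi)
        = ∑ j ∈ F, volume (ball (z j) ρ) := by
          simp [Complex.volume_ball, Finset.sum_const, nsmul_eq_mul,
            ← ENNReal.ofReal_pow hρ.le]
      _ ≤ volume (ball c R) := h1 ▸ h2
      _ = ENNReal.ofReal (R ^ 2) * NNReal.pi := by
          simp [Complex.volume_ball, ← ENNReal.ofReal_pow hR.le]
  have h4 : ENNReal.ofReal (R ^ 2) * (NNReal.pi : ℝ≥0∞)
      ≤ (N : ℝ≥0∞) * (ENNReal.ofReal (ρ ^ 2) * NNReal.pi) := by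
    rw [← mul_assoc]
    gcongr
    calc ENNReal.ofReal (R ^ 2) ≤ ENNReal.ofReal ((N : ℝ) * ρ ^ 2) := ENNReal.ofReal_le_ofReal hN
      _ = (N : ℝ≥0∞) * ENNReal.ofReal (ρ ^ 2) := by
          rw [ENNReal.ofReal_mul (by positivity), ENNReal.ofReal_natCast]
  have h5 : (F.card : ℝ≥0∞) ≤ (N : ℝ≥0∞) := by
    have hne : (ENNReal.ofReal (ρ ^ 2) * (NNReal.pi : ℝ≥0∞)) ≠ 0 := by
      have hpi : (NNReal.pi : ℝ≥0∞) ≠ 0 := by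
        simp [NNReal.pi_ne_zero]
      exact mul_ne_zero (ENNReal.ofReal_pos.mpr (pow_pos hρ 2)).ne' hpi
    have htop : (ENNReal.ofReal (ρ ^ 2) * (NNReal.pi : ℝ≥0∞)) ≠ ⊤ := by
      simp [ENNReal.mul_ne_top]
    exact (ENNReal.mul_le_mul_iff_left hne htop).mp (h3.trans h4)
  exact_mod_cast h5

noncomputable section

/-- The Laplacian of a radial function `z ↦ φ (|z|)`, expressed in the radius `r`. -/
def lapR (φ : ℝ → ℝ) (r : ℝ) : ℝ := deriv (deriv φ) r + deriv φ r / r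

/-- The quantity `∫_ℂ |f(z)|^p e^{-p φ(|z|)} dm(z)`, as a lower Lebesgue integral. -/
def fockLInt (φ : ℝ → ℝ) (p : ℝ) (f : ℂ → ℂ) : ℝ≥0∞ :=
  ∫⁻ z : ℂ, ENNReal.ofReal (‖f z‖ ^ p * Real.exp (-(p * φ ‖z‖)))

/-- Membership in the weighted Fock space `F^φ_p`: `f` is entire and has finite `F^φ_p` norm. -/
def MemFock (φ : ℝ → ℝ) (p : ℝ) (f : ℂ → ℂ) : Prop :=
  Differentiable ℂ f ∧ fockLInt φ p f < ⊤

/-- The class `𝓘` of rapidly increasing radial weights `φ`, with associated function `τ`. -/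
structure ClassI (φ τ : ℝ → ℝ) : Prop where
  φ_pos : ∀ r, 0 ≤ r → 0 < φ r
  φ_smooth : ContDiff ℝ 2 φ
  lap_pos : ∀ r, 0 < r → 0 < lapR φ r
  τ_pos : ∀ r, 0 ≤ r → 0 < τ r
  τ_diff : Differentiable ℝ τ
  τ_anti : ∀ r s, 0 ≤ r → r ≤ s → τ s ≤ τ r
  τ_lim : Tendsto τ atTop (nhds 0)
  τ_deriv_lim : Tendsto (deriv τ) atTop (nhds 0)
  τ_one : ∃ c, 0 < c ∧ ∀ r, 0 ≤ r → r < 1 → c⁻¹ ≤ τ r ∧ τ r ≤ c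
  τ_lap : ∃ c, 0 < c ∧ ∀ r, 1 ≤ r → c⁻¹ ≤ τ r ^ 2 * lapR φ r ∧ τ r ^ 2 * lapR φ r ≤ c
  extra : (∃ C, 0 < C ∧ ∃ R : ℝ, ∀ r s, R ≤ r → r ≤ s → τ r * r ^ C ≤ τ s * s ^ C) ∨
      Tendsto (fun r => deriv τ r * Real.log (1 / τ r)) atTop (nhds 0)

/-- The integral operator `T_g f (z) = ∫_0^z f(ζ) g'(ζ) dζ` (integral along the segment). -/
def Tg (g f : ℂ → ℂ) (z : ℂ) : ℂ := z * ∫ t in (0:ℝ)..1, f (t • z) * deriv g (t • z)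

/-- The integral mean `M_q(r,f)` (with `M_∞(r,f) = max_{|z|=r} |f(z)|`). -/
def circMean (q : ℝ≥0∞) (f : ℂ → ℂ) (r : ℝ) : ℝ :=
  if q = ⊤ then ⨆ t : ℝ, ‖f ((r : ℂ) * Complex.exp ((t : ℂ) * Complex.I))‖
  else ((2 * Real.pi)⁻¹ * ∫ t in (-Real.pi)..Real.pi,
      ‖f ((r : ℂ) * Complex.exp ((t : ℂ) * Complex.I))‖ ^ q.toReal) ^ (1 / q.toReal)

/-- The `p`-distortion function `ψ_{p,φ}(r) = (∫_r^∞ s e^{-pφ(s)} ds) / ((1+r) e^{-pφ(r)})`. -/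
def distortion (φ : ℝ → ℝ) (p r : ℝ) : ℝ :=
  (∫ s in Set.Ioi r, s * Real.exp (-(p * φ s))) / ((1 + r) * Real.exp (-(p * φ r)))

/-- Lemma 2.2 (covering lemma): if `t : ℂ → (0,∞)` is continuous, `(1/4)`-Lipschitz and
`t(z) → 0` as `|z| → ∞`, then there is a sequence `(z_j)` with: (i) `z_j ∉ D(z_k, t(z_k))`
for `j ≠ k`; (ii) the discs `D(z_j, t(z_j))` cover `ℂ`; (iii) the `t`-enlargement of
`D(z_j, t(z_j))` lies in `D(z_j, 3t(z_j))`; (iv) the covering `{D(z_j, 3t(z_j))}` has finite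
multiplicity. -/
theorem stmt11 (t : ℂ → ℝ) (hcont : Continuous t) (hpos : ∀ z, 0 < t z)
    (hlip : ∀ z ζ : ℂ, |t z - t ζ| ≤ (1 / 4) * ‖z - ζ‖)
    (hlim : Tendsto t (comap (fun z : ℂ => ‖z‖) atTop) (nhds 0)) :
    ∃ z : ℕ → ℂ,
      (∀ j k, j ≠ k → z j ∉ ball (z k) (t (z k))) ∧
      (⋃ j, ball (z j) (t (z j))) = Set.univ ∧
      (∀ j, (⋃ w ∈ ball (z j) (t (z j)), ball w (t w)) ⊆ ball (z j) (3 * t (z j))) ∧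
      (∃ N : ℕ, ∀ w : ℂ, {j : ℕ | w ∈ ball (z j) (3 * t (z j))}.encard ≤ N) := by
  classical
  have hfar : ∀ ε, 0 < ε → ∃ R : ℝ, ∀ v : ℂ, R ≤ ‖v‖ → t v < ε := by
    intro ε hε
    have h1 : {v : ℂ | t v < ε} ∈ comap (fun z : ℂ => ‖z‖) atTop := by
      exact hlim (Iio_mem_nhds hε)
    rw [mem_comap] at h1
    obtain ⟨s, hs, hsub⟩ := h1
    rw [mem_atTop_sets] at hs
    obtain ⟨R, hR⟩ := hs
    exact ⟨R, fun v hv => hsub (hR _ hv)⟩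
  have pick_ex : ∀ l : List ℂ, ∃ w : ℂ,
      (∀ u ∈ l, w ∉ ball u (t u)) ∧ ∀ v : ℂ, (∀ u ∈ l, v ∉ ball u (t u)) → t v ≤ t w := by
    intro l
    set F : Set ℂ := {v | ∀ u ∈ l, v ∉ ball u (t u)} with hFdef
    have hFc : IsClosed F := by
      have : F = ⋂ u ∈ {u | u ∈ l}, (ball u (t u))ᶜ := by
        ext v; simp [hFdef]
      rw [this]
      exact isClosed_biInter fun u _ => isOpen_ball.isClosed_compl
    have hbd : Bornology.IsBounded (⋃ u ∈ {u | u ∈ l}, ball u (t u)) :=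
      (Bornology.isBounded_biUnion l.finite_toSet).mpr (fun u _ => isBounded_ball)
    obtain ⟨r, hr⟩ := (isBounded_iff_subset_closedBall 0).mp hbd
    have hFne : F.Nonempty := by
      refine ⟨((max r 0 + 1 : ℝ) : ℂ), fun u hu hmem => ?_⟩
      have : ((max r 0 + 1 : ℝ) : ℂ) ∈ closedBall 0 r :=
        hr (Set.mem_biUnion hu hmem)
      rw [mem_closedBall, Complex.dist_eq, sub_zero, Complex.norm_real, Real.norm_eq_abs] at this
      have h1 : |max r 0 + 1| = max r 0 + 1 := abs_of_pos (by positivity)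
      rw [h1] at this
      have := le_max_left r 0
      linarith
    obtain ⟨w, hwF, hwmax⟩ := myExistsMax t hcont hpos hfar hFc hFne
    exact ⟨w, hwF, hwmax⟩
  let pick : List ℂ → ℂ := fun l => (pick_ex l).choose
  have pick_mem : ∀ l : List ℂ, ∀ u ∈ l, pick l ∉ ball u (t u) :=
    fun l => (pick_ex l).choose_spec.1
  have pick_max : ∀ l : List ℂ, ∀ v : ℂ, (∀ u ∈ l, v ∉ ball u (t u)) → t v ≤ t (pick l) :=
    fun l => (pick_ex l).choose_spec.2
  let hist : ℕ → List ℂ := fun n => Nat.rec [] (fun _ l => l ++ [pick l]) n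
  let z : ℕ → ℂ := fun n => pick (hist n)
  have hist_succ : ∀ n, hist (n + 1) = hist n ++ [z n] := fun n => rfl
  have hist_eq : ∀ n, hist n = (List.range n).map z := by
    intro n
    induction n with
    | zero => rfl
    | succ n ih => rw [hist_succ, ih, List.range_succ, List.map_append]; rfl
  have mem_hist : ∀ n u, u ∈ hist n ↔ ∃ j < n, z j = u := by
    intro n u
    rw [hist_eq]
    simp [List.mem_map, List.mem_range]
  have hznot : ∀ n j, j < n → z n ∉ ball (z j) (t (z j)) := by
    intro n j hj
    exact pick_mem (hist n) (z j) ((mem_hist n (z j)).mpr ⟨j, hj, rfl⟩)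
  have hzmax : ∀ n (v : ℂ), (∀ j < n, v ∉ ball (z j) (t (z j))) → t v ≤ t (z n) := by
    intro n v hv
    apply pick_max
    intro u hu
    obtain ⟨j, hj, rfl⟩ := (mem_hist n u).mp hu
    exact hv j hj
  have hi : ∀ j k, j ≠ k → z j ∉ ball (z k) (t (z k)) := by
    intro j k hjk
    rcases lt_or_gt_of_ne hjk with h | h
    · have h1 : z k ∉ ball (z j) (t (z j)) := hznot k j h
      have h2 : t (z k) ≤ t (z j) := hzmax j (z k) fun i hi' => hznot k i (hi'.trans h)
      rw [mem_ball, not_lt] at h1 ⊢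
      calc t (z k) ≤ t (z j) := h2
        _ ≤ dist (z k) (z j) := h1
        _ = dist (z j) (z k) := dist_comm _ _
    · exact hznot j k h
  have hii : (⋃ j, ball (z j) (t (z j))) = Set.univ := by
    rw [Set.eq_univ_iff_forall]
    intro w
    by_contra hw
    simp only [Set.mem_iUnion, not_exists] at hw
    have htz : ∀ j, t w ≤ t (z j) := fun j => hzmax j w fun i _ => hw i
    obtain ⟨R0, hR0⟩ := hfar (t w) (hpos w)
    have habs : ∀ j, ‖z j‖ < R0 := by
      intro j
      by_contra hc
      push_neg at hc
      exact absurd (htz j) (not_le.mpr (hR0 _ hc))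
    set ρ := t w / 2 with hρdef
    set R := R0 + ρ with hRdef
    have hρ : 0 < ρ := by
      have := hpos w; rw [hρdef]; linarith
    have hsep : ∀ j ∈ (Set.univ : Set ℕ), ∀ k ∈ (Set.univ : Set ℕ), j ≠ k →
        2 * ρ ≤ dist (z j) (z k) := by
      intro j _ k _ hjk
      have h1 : t (z k) ≤ dist (z j) (z k) := by
        have := hi j k hjk; rwa [mem_ball, not_lt] at this
      have h2 := htz k
      rw [hρdef]; linarith
    have hsub : ∀ j ∈ (Set.univ : Set ℕ), ball (z j) ρ ⊆ ball 0 R := by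
      intro j _ x hx
      rw [mem_ball] at hx ⊢
      have h1 : dist x 0 ≤ dist x (z j) + dist (z j) 0 := dist_triangle _ _ _
      have h2 : dist (z j) 0 < R0 := by
        rw [Complex.dist_eq, sub_zero]; exact habs j
      rw [hRdef]; linarith
    have hN : R ^ 2 ≤ (⌈R ^ 2 / ρ ^ 2⌉₊ : ℝ) * ρ ^ 2 := by
      have h1 := Nat.le_ceil (R ^ 2 / ρ ^ 2)
      have h2 : R ^ 2 / ρ ^ 2 * ρ ^ 2 = R ^ 2 := by
        field_simp
      nlinarith [sq_nonneg ρ, pow_pos hρ 2]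
    have hP := myPacking z Set.univ 0 ρ R hρ _ hsep hsub hN
    rw [Set.infinite_univ.encard_eq] at hP
    exact absurd hP (by simp)
  refine ⟨z, hi, hii, ?_, ?_⟩
  · intro j x hx
    simp only [Set.mem_iUnion] at hx
    obtain ⟨w, hw, hxw⟩ := hx
    rw [mem_ball] at hw hxw ⊢
    have hl := hlip w (z j)
    rw [← Complex.dist_eq] at hl
    obtain ⟨-, h1⟩ := abs_le.mp hl
    calc dist x (z j) ≤ dist x w + dist w (z j) := dist_triangle _ _ _
      _ < 3 * t (z j) := by linarith [hpos (z j)]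
  · refine ⟨2071, fun w => ?_⟩
    have hkey : ∀ j, w ∈ ball (z j) (3 * t (z j)) →
        (4 / 7 : ℝ) * t w < t (z j) ∧ t (z j) < 4 * t w := by
      intro j hj
      rw [mem_ball] at hj
      have hl := hlip w (z j)
      rw [← Complex.dist_eq] at hl
      obtain ⟨h1, h2⟩ := abs_le.mp hl
      constructor <;> linarith
    apply myPacking z _ w ((2 / 7) * t w) (13 * t w)
      (by linarith [hpos w] : (0:ℝ) < 2 / 7 * t w) 2071
    · intro j hj k hk hjk
      have h1 : t (z k) ≤ dist (z j) (z k) := by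
        have := hi j k hjk; rwa [mem_ball, not_lt] at this
      have h2 := (hkey k hk).1
      linarith
    · intro j hj x hx
      rw [mem_ball] at hx ⊢
      have h1 : dist x w ≤ dist x (z j) + dist (z j) w := dist_triangle _ _ _
      have h2 : dist (z j) w < 3 * t (z j) := by
        have := hj
        rw [Set.mem_setOf_eq, mem_ball, dist_comm] at this
        exact this
      have h3 := (hkey j hj).2
      have h4 := hpos w
      linarith
    · nlinarith [sq_nonneg (t w), (hpos w).le]
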